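/- Let S and T be strings and a, b characters with a ≠ b, such that a does not occur in T and b does not occur in S. Then the Levenshtein edit distance satisfies lev(S ++ [a], T ++ [b]) = 1 + lev(S, T); that is, when the last character of the source does not occur in the target and the last character of the target does not occur in the source, replacing one by the other is optimal. -/

import Mathlib

/-- Cost structure for Levenshtein edit distance (as in the former Mathlib
`Mathlib/Data/List/EditDistance/Defs.lean`, since removed from Mathlib). -/
structure Levenshtein.Cost (α β δ : Type*) where
  /-- Cost to delete an element from a list. -/
  delete : α → δ
  /-- Cost in insert an element into a list. -/
  insert : β → δ
  /-- Cost to substitute one element for another in a list. -/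
  substitute : α → β → δ

/-- The default cost structure, for which all operations cost `1`. -/
def Levenshtein.defaultCost {α : Type*} [DecidableEq α] : Levenshtein.Cost α α ℕ where
  delete _ := 1
  insert _ := 1
  substitute a b := if a = b then 0 else 1

namespace Levenshtein

/-- (Implementation detail) one step of the dynamic programming algorithm. -/
def impl {α β δ : Type*} [AddZeroClass δ] [Min δ]
    (C : Cost α β δ) (xs : List α) (y : β) (d : {r : List δ // 0 < r.length}) :
    {r : List δ // 0 < r.length} :=
  let ⟨ds, w⟩ := d
  xs.zip (ds.zip ds.tail) |>.foldr
    (init := ⟨[C.insert y + ds.getLast (List.ne_nil_of_length_pos w)], by simp⟩)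
    (fun ⟨x, d₀, d₁⟩ ⟨r, w⟩ =>
      ⟨min (C.delete x + r[0]) (min (C.insert y + d₀) (C.substitute x y + d₁)) :: r, by simp⟩)

end Levenshtein

open Levenshtein in
/-- `suffixLevenshtein C xs ys` computes the Levenshtein distance
(using the cost functions provided by `C`) from each suffix of the list `xs` to the list `ys`. -/
def suffixLevenshtein {α β δ : Type*} [AddZeroClass δ] [Min δ]
    (C : Cost α β δ) (xs : List α) (ys : List β) :
    {r : List δ // 0 < r.length} :=
  ys.foldr
    (impl C xs)
    (xs.foldr (init := ⟨[0], by simp⟩) (fun a ⟨ds, w⟩ => ⟨(C.delete a + ds[0]) :: ds, by simp⟩))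

open Levenshtein in
/-- `levenshtein C xs ys` computes the Levenshtein distance
(using the cost functions provided by `C`) from the list `xs` to the list `ys`. -/
def levenshtein {α β δ : Type*} [AddZeroClass δ] [Min δ]
    (C : Cost α β δ) (xs : List α) (ys : List β) : δ :=
  let ⟨r, w⟩ := suffixLevenshtein C xs ys
  r[0]

open Levenshtein

section
variable {α β δ : Type*} [AddZeroClass δ] [Min δ] {C : Cost α β δ}

@[simp] theorem Levenshtein.defaultCost_delete {α : Type*} [DecidableEq α] (a : α) :
    (defaultCost : Cost α α ℕ).delete a = 1 := rfl

@[simp] theorem Levenshtein.defaultCost_insert {α : Type*} [DecidableEq α] (a : α) :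
    (defaultCost : Cost α α ℕ).insert a = 1 := rfl

@[simp] theorem Levenshtein.defaultCost_substitute {α : Type*} [DecidableEq α] (a b : α) :
    (defaultCost : Cost α α ℕ).substitute a b = if a = b then 0 else 1 := rfl

theorem Levenshtein.impl_length {xs : List α} {y : β} (d : {r : List δ // 0 < r.length})
    (w : d.1.length = xs.length + 1) :
    (impl C xs y d).1.length = xs.length + 1 := by
  induction xs generalizing d with
  | nil => rfl
  | cons x xs ih =>
    dsimp [impl]
    match d, w with
    | ⟨d₁ :: d₂ :: ds, _⟩, w =>
      dsimp
      congr 1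
      exact ih ⟨d₂ :: ds, (by simp)⟩ (by simpa using w)

theorem suffixLevenshtein_length (xs : List α) (ys : List β) :
    (suffixLevenshtein C xs ys).1.length = xs.length + 1 := by
  induction ys with
  | nil =>
    dsimp [suffixLevenshtein]
    induction xs with
    | nil => rfl
    | cons _ xs ih =>
      simp_all
  | cons y ys ih =>
    dsimp [suffixLevenshtein]
    rw [impl_length]
    exact ih

theorem Levenshtein.impl_cons {x : α} {xs : List α} {y : β} {d : δ} {ds : List δ} {w}
    (w' : 0 < List.length ds) :
    impl C (x :: xs) y ⟨d :: ds, w⟩ =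
      let ⟨r, w⟩ := impl C xs y ⟨ds, w'⟩
      ⟨min (C.delete x + r[0]) (min (C.insert y + d) (C.substitute x y + ds[0])) :: r, by simp⟩ :=
  match ds, w' with | _ :: _, _ => rfl

theorem suffixLevenshtein_cons₂ (xs : List α) (y ys) :
    suffixLevenshtein C xs (y :: ys) = (impl C xs) y (suffixLevenshtein C xs ys) := rfl

theorem suffixLevenshtein_cons₁_aux {α} {x y : {r : List α // 0 < r.length}}
    (w₀ : x.1[0]'x.2 = y.1[0]'y.2) (w : x.1.tail = y.1.tail) : x = y := by
  match x, y with
  | ⟨hx :: tx, _⟩, ⟨hy :: ty, _⟩ => simp_all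

theorem suffixLevenshtein_cons₁ (x : α) (xs ys) :
    suffixLevenshtein C (x :: xs) ys =
      ⟨levenshtein C (x :: xs) ys ::
        (suffixLevenshtein C xs ys).1, by simp⟩ := by
  induction ys with
  | nil =>
    dsimp [levenshtein, suffixLevenshtein]
    rfl
  | cons y ys ih =>
    apply suffixLevenshtein_cons₁_aux
    · rfl
    · rw [suffixLevenshtein_cons₂ (x :: xs), ih, impl_cons]
      · rfl
      · simp [suffixLevenshtein_length]

theorem suffixLevenshtein_cons₁_fst (x : α) (xs ys) :
    (suffixLevenshtein C (x :: xs) ys).1 =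
      levenshtein C (x :: xs) ys :: (suffixLevenshtein C xs ys).1 := by
  simp [suffixLevenshtein_cons₁]

theorem Levenshtein.impl_cons_fst_zero {x : α} {xs : List α} {y : β} {d : δ} {ds : List δ} {w}
    (h : 0 < (impl C (x :: xs) y ⟨d :: ds, w⟩).1.length) (w' : 0 < ds.length) :
    (impl C (x :: xs) y ⟨d :: ds, w⟩).1[0]'h =
      min (C.delete x + (impl C xs y ⟨ds, w'⟩).1[0]'(impl C xs y ⟨ds, w'⟩).2)
        (min (C.insert y + d) (C.substitute x y + ds[0])) :=
  match ds, w' with | _ :: _, _ => rfl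

theorem Levenshtein.impl_nil_fst (y : β) (d : {r : List δ // 0 < r.length}) (h : d.1.length = 1)
    (p : 0 < (impl C [] y d).1.length) :
    (impl C [] y d).1[0]'p = C.insert y + d.1[0]'d.2 := by
  obtain ⟨ds, w⟩ := d
  match ds, w, h with
  | [v], _, _ => rfl

@[simp] theorem levenshtein_nil_nil : levenshtein C [] [] = 0 := rfl

@[simp] theorem levenshtein_nil_cons (y) (ys) :
    levenshtein C [] (y :: ys) = C.insert y + levenshtein C [] ys := by
  exact impl_nil_fst (C := C) y (suffixLevenshtein C [] ys) (suffixLevenshtein_length [] ys) _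

@[simp] theorem levenshtein_cons_nil (x : α) (xs : List α) :
    levenshtein C (x :: xs) [] = C.delete x + levenshtein C xs [] := rfl

@[simp] theorem levenshtein_cons_cons (x : α) (xs : List α) (y : β) (ys : List β) :
    levenshtein C (x :: xs) (y :: ys) =
      min (C.delete x + levenshtein C xs (y :: ys))
        (min (C.insert y + levenshtein C (x :: xs) ys)
          (C.substitute x y + levenshtein C xs ys)) :=
by
  show (suffixLevenshtein C (x :: xs) (y :: ys)).1[0]'(suffixLevenshtein C (x :: xs) (y :: ys)).2 = _
  have key : ∀ (d : {r : List δ // 0 < r.length}) (p : 0 < (impl C (x :: xs) y d).1.length),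
      d = ⟨levenshtein C (x :: xs) ys :: (suffixLevenshtein C xs ys).1, by simp⟩ →
      (impl C (x :: xs) y d).1[0]'p = min (C.delete x + levenshtein C xs (y :: ys))
        (min (C.insert y + levenshtein C (x :: xs) ys) (C.substitute x y + levenshtein C xs ys)) := by
    rintro d p rfl
    exact impl_cons_fst_zero p (suffixLevenshtein C xs ys).2
  exact key _ _ (suffixLevenshtein_cons₁ x xs ys)

end

private lemma lev_nil_right' {α : Type*} [DecidableEq α] (xs : List α) :
    levenshtein (defaultCost : Cost α α ℕ) xs [] = xs.length := by
  induction xs with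
  | nil => simp
  | cons x xs ih => simp [ih]; omega

private lemma lev_nil_left' {α : Type*} [DecidableEq α] (ys : List α) :
    levenshtein (defaultCost : Cost α α ℕ) [] ys = ys.length := by
  induction ys with
  | nil => simp
  | cons y ys ih => simp [ih]; omega

private lemma lev_append_le' {α : Type*} [DecidableEq α] (a b : α) (xs : List α) :
    ∀ ys : List α,
    levenshtein (defaultCost : Cost α α ℕ) (xs ++ [a]) (ys ++ [b]) ≤
      levenshtein defaultCost xs ys + 1 := by
  induction xs with
  | nil =>
    intro ys
    induction ys with
    | nil =>
      simp only [List.nil_append, levenshtein_cons_cons, levenshtein_nil_nil,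
        levenshtein_cons_nil, levenshtein_nil_cons, defaultCost_delete, defaultCost_insert,
        defaultCost_substitute]
      by_cases h : a = b <;> simp [h]
    | cons y ys ih =>
      have h2 := ih
      simp only [List.nil_append, List.cons_append, levenshtein_cons_cons, levenshtein_nil_cons,
        defaultCost_delete, defaultCost_insert, defaultCost_substitute] at *
      omega
  | cons x xs ihx =>
    intro ys
    induction ys with
    | nil =>
      have h1 := ihx []
      simp only [List.nil_append, List.cons_append, levenshtein_cons_cons, levenshtein_cons_nil,
        defaultCost_delete, defaultCost_insert, defaultCost_substitute] at *
      omega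
    | cons y ys ihy =>
      have h1 := ihx (y :: ys)
      have h2 := ihy
      have h3 := ihx ys
      simp only [List.cons_append, levenshtein_cons_cons,
        defaultCost_delete, defaultCost_insert, defaultCost_substitute] at *
      omega

private lemma le_lev_append' {α : Type*} [DecidableEq α] (a b : α) (hab : a ≠ b) (xs : List α) :
    ∀ ys : List α, a ∉ ys → b ∉ xs →
    levenshtein (defaultCost : Cost α α ℕ) xs ys + 1 ≤
      levenshtein defaultCost (xs ++ [a]) (ys ++ [b]) := by
  induction xs with
  | nil =>
    intro ys
    induction ys with
    | nil =>
      intro _ _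
      simp [levenshtein_cons_cons, hab]
    | cons y ys ih =>
      intro haT _
      have hay : a ≠ y := fun h => haT (h ▸ List.mem_cons_self (a := y) (l := ys))
      have h2 := ih (fun h => haT (List.mem_cons_of_mem _ h)) (by simp)
      have h4 := lev_nil_left' (ys ++ [b])
      have h5 := lev_nil_left' ys
      simp only [List.nil_append, List.cons_append, levenshtein_cons_cons, levenshtein_nil_cons,
        List.length_append, List.length_cons, List.length_nil,
        defaultCost_delete, defaultCost_insert, defaultCost_substitute, if_neg hay] at *
      omega
  | cons x xs ihx =>
    intro ys
    induction ys with
    | nil =>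
      intro _ hbS
      have hbx : x ≠ b := fun h => hbS (h ▸ List.mem_cons_self (a := x) (l := xs))
      have h1 := ihx [] (by simp) (fun h => hbS (List.mem_cons_of_mem _ h))
      have h4 := lev_nil_right' (xs ++ [a])
      have h5 := lev_nil_right' xs
      simp only [List.nil_append, List.cons_append, levenshtein_cons_cons, levenshtein_cons_nil,
        List.length_append, List.length_cons, List.length_nil,
        defaultCost_delete, defaultCost_insert, defaultCost_substitute, if_neg hbx] at *
      omega
    | cons y ys ihy =>
      intro haT hbS
      have hbxs : b ∉ xs := fun h => hbS (List.mem_cons_of_mem _ h)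
      have hays : a ∉ ys := fun h => haT (List.mem_cons_of_mem _ h)
      have h1 := ihx (y :: ys) haT hbxs
      have h2 := ihy hays hbS
      have h3 := ihx ys hays hbxs
      simp only [List.cons_append, levenshtein_cons_cons,
        defaultCost_delete, defaultCost_insert, defaultCost_substitute] at *
      by_cases hxy : x = y <;> simp only [if_pos, if_neg, hxy, if_true] at * <;> omega

theorem levenshtein_append_not_mem {α : Type*} [DecidableEq α]
    (S T : List α) (a b : α) (hab : a ≠ b) (haT : a ∉ T) (hbS : b ∉ S) :
    levenshtein Levenshtein.defaultCost (S ++ [a]) (T ++ [b]) =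
      1 + levenshtein Levenshtein.defaultCost S T := by
  have h1 := lev_append_le' a b S T
  have h2 := le_lev_append' a b hab S T haT hbS
  omega
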